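/- Let Σ = Σ_1 ∪ ⋯ ∪ Σ_k be a partition of the alphabet into pairwise disjoint nonempty blocks and let L ⊆ Σ* be closed under the associated partial commutation. Then L = π_{Σ_1}(L) ⧢ π_{Σ_2}(L) ⧢ ⋯ ⧢ π_{Σ_k}(L) if and only if for every word w ∈ Σ*: w ∈ L ⟺ π_{Σ_i}(w) ∈ π_{Σ_i}(L) for all i ∈ {1,…,k}. -/

import Mathlib

/-- The Nerode right-congruence of a language `L`: `u ≡_L v` iff
for all words `x`, `u ++ x ∈ L ↔ v ++ x ∈ L`. -/
def NerodeEq {α : Type*} (L : Set (List α)) (u v : List α) : Prop :=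
  ∀ x : List α, u ++ x ∈ L ↔ v ++ x ∈ L

/-- The Nerode right-congruence as a setoid on words. -/
def nerodeSetoid {α : Type*} (L : Set (List α)) : Setoid (List α) where
  r := NerodeEq L
  iseqv := ⟨fun _ _ => Iff.rfl, fun h x => (h x).symm, fun h1 h2 x => (h1 x).trans (h2 x)⟩

/-- A language is regular iff its Nerode right-congruence has finitely many classes. -/
def RegularLang {α : Type*} (L : Set (List α)) : Prop :=
  Finite (Quotient (nerodeSetoid L))

/-- The state complexity of `L`: the number of Nerode right-congruence classes. -/
noncomputable def sc {α : Type*} (L : Set (List α)) : ℕ :=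
  Nat.card (Quotient (nerodeSetoid L))

/-- A language is commutative if membership only depends on the number of
occurrences of each letter. -/
def CommutativeLang {α : Type*} [DecidableEq α] (L : Set (List α)) : Prop :=
  ∀ u v : List α, (∀ x : α, u.count x = v.count x) → (u ∈ L ↔ v ∈ L)

/-- A (commutative) language has a product-form minimal automaton iff for all words
`u, v`: `u ≡_L v` holds if and only if `x^{|u|_x} ≡_L x^{|v|_x}` for every letter `x`. -/
def HasProductForm {α : Type*} [DecidableEq α] (L : Set (List α)) : Prop :=
  ∀ u v : List α,
    NerodeEq L u v ↔
      ∀ x : α, NerodeEq L (List.replicate (u.count x) x) (List.replicate (v.count x) x)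

/-- `IsShuffleOf u v w` holds iff `w` is an interleaving `x₁y₁x₂y₂⋯xₙyₙ`
with `u = x₁⋯xₙ` and `v = y₁⋯yₙ`. -/
inductive IsShuffleOf {α : Type*} : List α → List α → List α → Prop
  | nil : IsShuffleOf [] [] []
  | left {u v w : List α} {a : α} : IsShuffleOf u v w → IsShuffleOf (a :: u) v (a :: w)
  | right {u v w : List α} {a : α} : IsShuffleOf u v w → IsShuffleOf u (a :: v) (a :: w)

/-- The shuffle of two languages. -/
def shuffleLang {α : Type*} (U V : Set (List α)) : Set (List α) :=
  {w | ∃ u ∈ U, ∃ v ∈ V, IsShuffleOf u v w}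

/-- The iterated shuffle `L₁ ⧢ L₂ ⧢ ⋯ ⧢ Lₙ` of a list of languages
(`{ε}` is the neutral element of the shuffle). -/
def shuffles {α : Type*} (Ls : List (Set (List α))) : Set (List α) :=
  Ls.foldr shuffleLang {[]}

/-- With a partition of the alphabet encoded by a coloring `c : α → Fin k`
(block `Σ_i = c⁻¹(i)`), `projC c i w` is the projection `π_{Σ_i}(w)`. -/
def projC {α : Type*} {k : ℕ} (c : α → Fin k) (i : Fin k) (w : List α) : List α :=
  w.filter (fun x => c x = i)

/-- `L` is closed under the partial commutation associated with the partition
encoded by `c : α → Fin k`: letters in distinct blocks commute. -/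
def PartialCommClosed {α : Type*} {k : ℕ} (c : α → Fin k) (L : Set (List α)) : Prop :=
  ∀ x y : α, c x ≠ c y → ∀ u v : List α,
    (u ++ x :: y :: v ∈ L ↔ u ++ y :: x :: v ∈ L)

namespace Stmt16Aux

open List

lemma eq_of_isShuffleOf_nil_left {α : Type*} {u v w : List α}
    (h : IsShuffleOf u v w) (hu : u = []) : v = w := by
  induction h with
  | nil => rfl
  | left h ih => simp at hu
  | right h ih => rw [ih hu]

lemma eq_of_isShuffleOf_nil_right {α : Type*} {u v w : List α}
    (h : IsShuffleOf u v w) (hv : v = []) : u = w := by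
  induction h with
  | nil => rfl
  | left h ih => rw [ih hv]
  | right h ih => simp at hv

lemma mem_of_isShuffleOf {α : Type*} {u v w : List α}
    (h : IsShuffleOf u v w) : ∀ a ∈ w, a ∈ u ∨ a ∈ v := by
  induction h with
  | nil => simp
  | @left u v w b h ih =>
      intro a ha
      rcases List.mem_cons.1 ha with rfl | ha
      · exact Or.inl (List.mem_cons_self)
      · rcases ih a ha with h' | h'
        · exact Or.inl (List.mem_cons_of_mem _ h')
        · exact Or.inr h'
  | @right u v w b h ih =>
      intro a ha
      rcases List.mem_cons.1 ha with rfl | ha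
      · exact Or.inr (List.mem_cons_self)
      · rcases ih a ha with h' | h'
        · exact Or.inl h'
        · exact Or.inr (List.mem_cons_of_mem _ h')

lemma isShuffleOf_filter {α : Type*} (p : α → Bool) {u v w : List α}
    (h : IsShuffleOf u v w) :
    IsShuffleOf (u.filter p) (v.filter p) (w.filter p) := by
  induction h with
  | nil => exact .nil
  | @left u v w a h ih =>
      cases hp : p a <;> simp only [List.filter_cons, hp] <;>
        [exact ih; exact .left ih]
  | @right u v w a h ih =>
      cases hp : p a <;> simp only [List.filter_cons, hp] <;>
        [exact ih; exact .right ih]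

lemma isShuffleOf_filter_self {α : Type*} (p : α → Bool) (w : List α) :
    IsShuffleOf (w.filter p) (w.filter (fun a => !p a)) w := by
  induction w with
  | nil => exact .nil
  | cons a w ih =>
      cases hp : p a <;> simp only [List.filter_cons, hp, Bool.not_true, Bool.not_false]
      · exact .right ih
      · exact .left ih

lemma shuffles_colors {α : Type*} {k : ℕ} (c : α → Fin k) (F : Fin k → Set (List α))
    (hF : ∀ i, ∀ u ∈ F i, ∀ a ∈ u, c a = i) :
    ∀ (is : List (Fin k)) (w : List α), w ∈ shuffles (is.map F) → ∀ a ∈ w, c a ∈ is := by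
  intro is
  induction is with
  | nil =>
      intro w hw a ha
      simp only [List.map_nil, shuffles, List.foldr_nil, Set.mem_singleton_iff] at hw
      subst hw; simp at ha
  | cons i is ih =>
      rintro w ⟨u, hu, v, hv, hsh⟩ a ha
      rcases mem_of_isShuffleOf hsh a ha with h' | h'
      · exact (hF i u hu a h') ▸ List.mem_cons_self
      · exact List.mem_cons_of_mem _ (ih v hv a h')

lemma shuffles_proj {α : Type*} {k : ℕ} (c : α → Fin k) (F : Fin k → Set (List α))
    (hF : ∀ i, ∀ u ∈ F i, ∀ a ∈ u, c a = i) :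
    ∀ (is : List (Fin k)), is.Nodup → ∀ w, w ∈ shuffles (is.map F) →
      ∀ i ∈ is, projC c i w ∈ F i := by
  intro is
  induction is with
  | nil => intro _ w _ i hi; simp at hi
  | cons i₀ is ih =>
      rintro hnd w ⟨u, hu, v, hv, hsh⟩ i hi
      have hnd' := hnd
      rw [List.nodup_cons] at hnd'
      have hsf := isShuffleOf_filter (fun a => decide (c a = i)) hsh
      rcases List.mem_cons.1 hi with rfl | hi'
      · have hu' : u.filter (fun a => decide (c a = i)) = u :=
          List.filter_eq_self.2 (fun a ha => by simp [hF i u hu a ha])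
        have hv' : v.filter (fun a => decide (c a = i)) = [] :=
          List.filter_eq_nil_iff.2 (fun a ha => by
            simp only [decide_eq_true_eq]
            intro hc
            exact hnd'.1 (hc ▸ shuffles_colors c F hF is v hv a ha))
        rw [hu', hv'] at hsf
        have := eq_of_isShuffleOf_nil_right hsf rfl
        rw [projC, ← this]
        exact hu
      · have hi0 : i ≠ i₀ := fun h => hnd'.1 (h ▸ hi')
        have hu' : u.filter (fun a => decide (c a = i)) = [] :=
          List.filter_eq_nil_iff.2 (fun a ha => by
            simp only [decide_eq_true_eq]
            intro hc
            exact hi0 (hc ▸ (hF i₀ u hu a ha).symm ▸ rfl))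
        rw [hu'] at hsf
        have := eq_of_isShuffleOf_nil_left hsf rfl
        have h2 := ih hnd'.2 v hv i hi'
        rw [projC] at h2 ⊢
        rw [← this]
        exact h2

lemma mem_shuffles {α : Type*} {k : ℕ} (c : α → Fin k) (F : Fin k → Set (List α)) :
    ∀ (is : List (Fin k)), is.Nodup → ∀ w : List α, (∀ a ∈ w, c a ∈ is) →
      (∀ i ∈ is, projC c i w ∈ F i) → w ∈ shuffles (is.map F) := by
  intro is
  induction is with
  | nil =>
      intro _ w hw _
      have : w = [] := by
        cases w with
        | nil => rfl
        | cons a w => exact absurd (hw a (List.mem_cons_self)) (by simp)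
      simp [shuffles, this]
  | cons i is ih =>
      intro hnd w hw hproj
      rw [List.nodup_cons] at hnd
      refine ⟨projC c i w, hproj i (List.mem_cons_self),
        w.filter (fun a => !decide (c a = i)), ?_, isShuffleOf_filter_self _ w⟩
      refine ih hnd.2 _ (fun a ha => ?_) (fun j hj => ?_)
      · rw [List.mem_filter] at ha
        have := hw a ha.1
        rcases List.mem_cons.1 this with h' | h'
        · simp [h'] at ha
        · exact h'
      · have hji : j ≠ i := fun h => hnd.1 (h ▸ hj)
        have : projC c j (w.filter (fun a => !decide (c a = i))) = projC c j w := by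
          rw [projC, projC, List.filter_filter]
          apply List.filter_congr
          intro a _
          by_cases h : c a = j
          · simp [h, hji]
          · simp [h]
        rw [this]
        exact hproj j (List.mem_cons_of_mem _ hj)

end Stmt16Aux

/-- If `L` is closed under the partial commutation associated with the partition
`Σ = Σ_1 ∪ ⋯ ∪ Σ_k`, then `L = π_{Σ_1}(L) ⧢ ⋯ ⧢ π_{Σ_k}(L)` iff for every word `w`:
`w ∈ L ⟺ π_{Σ_i}(w) ∈ π_{Σ_i}(L)` for all `i`. -/
theorem stmt16 {α : Type*} {k : ℕ} (c : α → Fin k) (hsurj : Function.Surjective c)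
    (L : Set (List α)) (hL : PartialCommClosed c L) :
    L = shuffles (List.ofFn fun i : Fin k => projC c i '' L) ↔
      ∀ w : List α, w ∈ L ↔ ∀ i : Fin k, projC c i w ∈ projC c i '' L := by
  classical
  have hF : ∀ i : Fin k, ∀ u ∈ projC c i '' L, ∀ a ∈ u, c a = i := by
    rintro i u ⟨l, _, rfl⟩ a ha
    rw [projC, List.mem_filter] at ha
    exact of_decide_eq_true ha.2
  have claim : ∀ w : List α,
      w ∈ shuffles (List.ofFn fun i : Fin k => projC c i '' L) ↔
        ∀ i : Fin k, projC c i w ∈ projC c i '' L := by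
    intro w
    rw [List.ofFn_eq_map]
    constructor
    · intro hw i
      exact Stmt16Aux.shuffles_proj c _ hF _ (List.nodup_finRange k) w hw i
        (List.mem_finRange i)
    · intro hw
      exact Stmt16Aux.mem_shuffles c _ _ (List.nodup_finRange k) w
        (fun a _ => List.mem_finRange _) (fun i _ => hw i)
  rw [Set.ext_iff]
  exact ⟨fun h w => (h w).trans (claim w), fun h w => (h w).trans (claim w).symm⟩
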